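/- arXiv:2303.09125 — 4 statements merged into one kernel-verified Lean document; each statement's English description precedes it below -/
import Mathlib

section
/- Let A be a finite commutative ring with unity and let G = A/a₁A ⊕ ⋯ ⊕ A/a_lA for some a₁, …, a_l ∈ A. Then |Hom_A(G, A)| = |G|. -/
open LinearMap

private lemma smul_mk_one {A : Type*} [CommRing A] (I : Ideal A) (z : A) :
    z • Ideal.Quotient.mk I 1 = Ideal.Quotient.mk I z := by
  rw [show Ideal.Quotient.mk I 1 = Submodule.Quotient.mk 1 from rfl,
    ← Submodule.Quotient.mk_smul, smul_eq_mul, mul_one]; rfl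

noncomputable def hom_equiv_ker {A : Type*} [CommRing A] (a : A) :
    ((A ⧸ Ideal.span {a}) →ₗ[A] A) ≃ ker (toSpanSingleton A A a) where
  toFun g := ⟨g (Ideal.Quotient.mk _ 1), by
    rw [mem_ker, toSpanSingleton_apply, smul_eq_mul, mul_comm, ← smul_eq_mul, ← g.map_smul,
      smul_mk_one, Ideal.Quotient.eq_zero_iff_mem.mpr (Ideal.mem_span_singleton_self a),
      g.map_zero]⟩
  invFun x := Submodule.liftQ _ (toSpanSingleton A A x.1) (by
    rw [Ideal.span_le, Set.singleton_subset_iff]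
    have h := mem_ker.mp x.2
    rw [toSpanSingleton_apply] at h
    rw [SetLike.mem_coe, mem_ker, toSpanSingleton_apply, smul_eq_mul, mul_comm, ← smul_eq_mul, h])
  left_inv g := by
    apply LinearMap.ext; intro y
    obtain ⟨z, rfl⟩ := Ideal.Quotient.mk_surjective y
    show z * g (Ideal.Quotient.mk (Ideal.span {a}) 1) = g (Ideal.Quotient.mk _ z)
    rw [← smul_eq_mul, ← g.map_smul, smul_mk_one]
  right_inv x := by
    ext
    show (1 : A) * x.1 = x.1
    rw [one_mul]

lemma card_hom_quot {A : Type*} [CommRing A] [Fintype A] (a : A) :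
    Nat.card ((A ⧸ Ideal.span {a}) →ₗ[A] A) = Nat.card (A ⧸ Ideal.span {a}) := by
  set f := toSpanSingleton A A a with hf
  have hrange : range f = Ideal.span {a} := (span_singleton_eq_range A A a).symm
  have h1 : Nat.card A = Nat.card (ker f) * Nat.card (A ⧸ ker f) :=
    Submodule.card_eq_card_quotient_mul_card (ker f)
  have h2 : Nat.card A = Nat.card (Ideal.span {a}) * Nat.card (A ⧸ Ideal.span {a}) :=
    Submodule.card_eq_card_quotient_mul_card _
  have h3 : Nat.card (A ⧸ ker f) = Nat.card (Ideal.span {a}) := by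
    rw [← hrange]; exact Nat.card_congr f.quotKerEquivRange.toEquiv
  have hpos : 0 < Nat.card (Ideal.span {a}) := Nat.card_pos
  rw [Nat.card_congr (hom_equiv_ker a)]
  have h := h1.symm.trans h2
  rw [h3, mul_comm (Nat.card (ker f : Submodule A A))] at h
  exact Nat.eq_of_mul_eq_mul_left hpos h

/-- For a finite commutative ring `A` with unity and
`G = A/a₁A ⊕ ⋯ ⊕ A/a_lA`, one has `|Hom_A(G, A)| = |G|`. -/
theorem stmt_1 (A : Type*) [CommRing A] [Fintype A] (l : ℕ) (a : Fin l → A) :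
    Nat.card (((i : Fin l) → A ⧸ Ideal.span {a i}) →ₗ[A] A)
      = Nat.card ((i : Fin l) → A ⧸ Ideal.span {a i}) := by
  rw [← Nat.card_congr (LinearMap.lsum A (fun i => A ⧸ Ideal.span {a i}) A).toEquiv,
    Nat.card_pi, Nat.card_pi]
  exact Finset.prod_congr rfl fun i _ => card_hom_quot (a i)
end

section
/- Let D be a principal ideal domain, f a nonzero element of D, and A = D/fD. Then A is annihilator-reversing: for any x, y ∈ A with Ann(x) ⊆ Ann(y), one has yA ⊆ xA. -/
/-- For a PID `D` and nonzero `f ∈ D`, the quotient `A = D/fD` is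
annihilator-reversing: `Ann(x) ⊆ Ann(y)` implies `yA ⊆ xA`. -/
theorem stmt_4 (D : Type*) [CommRing D] [IsDomain D] [IsPrincipalIdealRing D]
    (f : D) (hf : f ≠ 0) (x y : D ⧸ Ideal.span {f})
    (h : ∀ r : D ⧸ Ideal.span {f}, r * x = 0 → r * y = 0) :
    Ideal.span {y} ≤ Ideal.span {x} := by
  rw [Ideal.span_singleton_le_span_singleton]
  obtain ⟨a, rfl⟩ := Ideal.Quotient.mk_surjective x
  obtain ⟨b, rfl⟩ := Ideal.Quotient.mk_surjective y
  -- g = gcd(a, f)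
  obtain ⟨g, hg⟩ := (IsPrincipalIdealRing.principal (Ideal.span ({a, f} : Set D))).principal
  rw [Ideal.submodule_span_eq] at hg
  have hga : g ∣ a := by
    rw [← Ideal.span_singleton_le_span_singleton, ← hg]
    exact Ideal.span_mono (by simp)
  have hgf : g ∣ f := by
    rw [← Ideal.span_singleton_le_span_singleton, ← hg]
    exact Ideal.span_mono (by simp)
  have hgmem : g ∈ Ideal.span ({a, f} : Set D) := by
    rw [hg]; exact Ideal.mem_span_singleton_self g
  obtain ⟨u, v, huv⟩ := Ideal.mem_span_pair.mp hgmem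
  obtain ⟨a', ha'⟩ := hga
  obtain ⟨f', hf'⟩ := hgf
  have hf'0 : f' ≠ 0 := fun hc => hf (by simp [hf', hc])
  -- f' kills x
  have hx : (Ideal.Quotient.mk (Ideal.span {f}) f') * Ideal.Quotient.mk _ a = 0 := by
    rw [← map_mul, Ideal.Quotient.eq_zero_iff_mem, Ideal.mem_span_singleton]
    exact ⟨a', by rw [ha', hf']; ring⟩
  have hy := h _ hx
  rw [← map_mul, Ideal.Quotient.eq_zero_iff_mem, Ideal.mem_span_singleton] at hy
  obtain ⟨t, ht⟩ := hy
  -- f' * b = f * t = g * f' * t, cancel f'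
  have hb : b = g * t := by
    have : f' * b = f' * (g * t) := by rw [ht, hf']; ring
    exact mul_left_cancel₀ hf'0 this
  -- b = (u*a + v*f)*t ≡ (u*t)*a mod f
  refine ⟨Ideal.Quotient.mk _ (u * t), ?_⟩
  rw [← map_mul, Ideal.Quotient.eq, Ideal.mem_span_singleton]
  exact ⟨v * t, by rw [hb, ← huv]; ring⟩
end

section
/- Let μ be a probability measure on ℤ/p^kℤ such that Prob(x ≡ a mod p) ≤ 1 − ε for every a ∈ 𝔽_p, where 0 < ε < 1. Then for every nonzero u ∈ ℤ/p^kℤ, |E_{x ~ μ}(ζ^{ux})| ≤ e^{−ε/p^{2k}}, where ζ = e^{2πi/p^k}. -/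
open Complex Finset

private lemma cos_aux {N m : ℕ} (hm : 1 ≤ m) (h2 : 2 * m ≤ N) :
    Real.cos (2 * Real.pi * m / N) ≤ 1 - 8 / (N : ℝ) ^ 2 := by
  have hN : (2 : ℝ) ≤ N := by exact_mod_cast le_trans (by omega) h2
  have hNpos : (0 : ℝ) < N := by linarith
  have hmR : (1 : ℝ) ≤ m := by exact_mod_cast hm
  have h2R : 2 * (m : ℝ) ≤ N := by exact_mod_cast h2
  have hpi := Real.pi_pos
  have hx0 : 0 ≤ 2 * Real.pi * m / N := by positivity
  have hxpi : 2 * Real.pi * m / N ≤ Real.pi := by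
    rw [div_le_iff₀ hNpos]; nlinarith
  have hb := Real.cos_le_one_sub_mul_cos_sq (x := 2 * Real.pi * m / N)
    (by rw [_root_.abs_of_nonneg hx0]; exact hxpi)
  have heq : 2 / Real.pi ^ 2 * (2 * Real.pi * (m : ℝ) / N) ^ 2
      = 8 * (m : ℝ) ^ 2 / (N : ℝ) ^ 2 := by
    field_simp; ring
  rw [heq] at hb
  have h8 : 8 / (N : ℝ) ^ 2 ≤ 8 * (m : ℝ) ^ 2 / (N : ℝ) ^ 2 := by
    gcongr
    nlinarith
  linarith

private lemma cos_bound {N m : ℕ} (hN : 2 ≤ N) (hm : 1 ≤ m) (hmN : m < N) :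
    Real.cos (2 * Real.pi * m / N) ≤ 1 - 8 / (N : ℝ) ^ 2 := by
  rcases le_or_gt (2 * m) N with h | h
  · exact cos_aux hm h
  · have hm' : 1 ≤ N - m := by omega
    have h2 : 2 * (N - m) ≤ N := by omega
    have hkey := cos_aux hm' h2
    have hNpos : (0 : ℝ) < N := by positivity
    have hcast : ((N - m : ℕ) : ℝ) = (N : ℝ) - m := Nat.cast_sub hmN.le
    rw [hcast] at hkey
    have harg : 2 * Real.pi * m / N = 2 * Real.pi - 2 * Real.pi * ((N : ℝ) - m) / N := by
      field_simp; ring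
    rw [harg, Real.cos_two_pi_sub]
    exact hkey

private theorem char_sum_aux {N : ℕ} [NeZero N] (hN2 : 2 ≤ N)
    (ε : ℝ) (hε0 : 0 < ε)
    (μ : ZMod N → ℝ) (hμ0 : ∀ x, 0 ≤ μ x) (hμ1 : ∑ x, μ x = 1)
    {α : Type} [DecidableEq α] (f : ZMod N → α)
    (hbal : ∀ x : ZMod N,
      ∑ y ∈ Finset.univ.filter (fun y : ZMod N => f y = f x), μ y ≤ 1 - ε)
    (u : ZMod N)
    (hkey : ∀ x y : ZMod N, f y ≠ f x → u * y - u * x ≠ 0) :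
    ‖∑ x : ZMod N, (μ x : ℂ) *
        Complex.exp (2 * Real.pi * Complex.I * ((u * x).val : ℂ) / (N : ℂ))‖
      ≤ Real.exp (-ε / (N : ℝ) ^ 2) := by
  have hNR : (2 : ℝ) ≤ (N : ℝ) := by exact_mod_cast hN2
  set χ := ZMod.stdAddChar (N := N) with hχdef
  have hterm : ∀ w : ZMod N,
      Complex.exp (2 * Real.pi * Complex.I * (w.val : ℂ) / (N : ℂ)) = χ w := by
    intro w
    have h1 := ZMod.stdAddChar_coe (N := N) (w.val : ℤ)
    have h2 : (((w.val : ℤ) : ZMod N)) = w := by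
      push_cast
      exact ZMod.natCast_rightInverse w
    rw [h2] at h1
    rw [h1]
    push_cast
    ring_nf
  have hconj : ∀ w : ZMod N, (starRingEnd ℂ) (χ w) = χ (-w) := by
    intro w
    rw [hχdef, ZMod.stdAddChar_apply, ZMod.stdAddChar_apply, ← Circle.coe_inv_eq_conj,
      ← AddChar.map_neg_eq_inv]
  have habs : ∀ w : ZMod N, ‖χ w‖ = 1 := by
    intro w; rw [hχdef, ZMod.stdAddChar_apply]; exact Circle.norm_coe _
  have hre1 : ∀ w : ZMod N, (χ w).re ≤ 1 := by
    intro w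
    calc (χ w).re ≤ |(χ w).re| := le_abs_self _
    _ ≤ ‖χ w‖ := Complex.abs_re_le_norm _
    _ = 1 := habs w
  have hre2 : ∀ w : ZMod N, w ≠ 0 → (χ w).re ≤ 1 - 8 / (N : ℝ) ^ 2 := by
    intro w hw
    have hval : χ w = Complex.exp (((2 * Real.pi * (w.val : ℝ) / N : ℝ) : ℂ) * Complex.I) := by
      rw [← hterm w]
      congr 1
      push_cast
      ring
    have hre : (χ w).re = Real.cos (2 * Real.pi * (w.val : ℝ) / N) := by
      rw [hval, Complex.exp_ofReal_mul_I_re]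
    rw [hre]
    have hm1 : 1 ≤ w.val := by
      rcases Nat.eq_zero_or_pos w.val with h | h
      · exact absurd ((ZMod.val_eq_zero _).mp h) hw
      · omega
    exact_mod_cast cos_bound hN2 hm1 (ZMod.val_lt w)
  set S := ∑ x : ZMod N, (μ x : ℂ) * χ (u * x) with hSdef
  have hSrw : (∑ x : ZMod N, (μ x : ℂ) *
      Complex.exp (2 * Real.pi * Complex.I * ((u * x).val : ℂ) / (N : ℂ))) = S := by
    apply Finset.sum_congr rfl
    intro x _
    rw [hterm (u * x)]
  have hsq : ‖S‖ ^ 2 = ∑ x : ZMod N, ∑ y : ZMod N, μ x * μ y * (χ (u * y - u * x)).re := by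
    have h1 : (starRingEnd ℂ) S * S
        = ∑ x : ZMod N, ∑ y : ZMod N, ((μ x * μ y : ℝ) : ℂ) * χ (u * y - u * x) := by
      rw [hSdef, map_sum, Finset.sum_mul_sum]
      apply Finset.sum_congr rfl; intro x _
      apply Finset.sum_congr rfl; intro y _
      rw [map_mul, hconj, Complex.conj_ofReal]
      have : χ (u * y - u * x) = χ (u * y) * χ (-(u * x)) := by
        rw [← AddChar.map_add_eq_mul]; congr 1; ring
      rw [this]
      push_cast
      ring
    have h2 : ‖S‖ ^ 2 = ((starRingEnd ℂ) S * S).re := by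
      rw [mul_comm, Complex.mul_conj]
      simp [Complex.sq_norm]
    rw [h2, h1, Complex.re_sum]
    apply Finset.sum_congr rfl; intro x _
    rw [Complex.re_sum]
    apply Finset.sum_congr rfl; intro y _
    rw [Complex.re_ofReal_mul]
  set δ := 8 / (N : ℝ) ^ 2 with hδdef
  have hδ0 : 0 ≤ δ := by positivity
  have hinner : ∀ x : ZMod N, ∑ y : ZMod N, μ y * (χ (u * y - u * x)).re ≤ 1 - δ * ε := by
    intro x
    have hsplit := Finset.sum_filter_add_sum_filter_not Finset.univ
      (fun y : ZMod N => f y = f x) (fun y => μ y * (χ (u * y - u * x)).re)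
    have hsplitμ := Finset.sum_filter_add_sum_filter_not Finset.univ
      (fun y : ZMod N => f y = f x) μ
    rw [hμ1] at hsplitμ
    set q := ∑ y ∈ Finset.univ.filter (fun y : ZMod N => f y = f x), μ y with hqdef
    have hq1 : q ≤ 1 - ε := hbal x
    have hq0 : 0 ≤ q := Finset.sum_nonneg (fun y _ => hμ0 y)
    have hA : ∑ y ∈ Finset.univ.filter (fun y : ZMod N => f y = f x),
        μ y * (χ (u * y - u * x)).re ≤ q := by
      rw [hqdef]
      apply Finset.sum_le_sum
      intro y _
      calc μ y * (χ (u * y - u * x)).re ≤ μ y * 1 :=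
        mul_le_mul_of_nonneg_left (hre1 _) (hμ0 y)
      _ = μ y := mul_one _
    have hB : ∑ y ∈ Finset.univ.filter (fun y : ZMod N => ¬ f y = f x),
        μ y * (χ (u * y - u * x)).re
        ≤ ∑ y ∈ Finset.univ.filter (fun y : ZMod N => ¬ f y = f x), μ y * (1 - δ) := by
      apply Finset.sum_le_sum
      intro y hy
      have hne : f y ≠ f x := (Finset.mem_filter.mp hy).2
      exact mul_le_mul_of_nonneg_left (hre2 _ (hkey x y hne)) (hμ0 y)
    have hBsum : ∑ y ∈ Finset.univ.filter (fun y : ZMod N => ¬ f y = f x), μ y * (1 - δ)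
        = (1 - q) * (1 - δ) := by
      rw [← Finset.sum_mul]
      congr 1
      linarith
    calc ∑ y : ZMod N, μ y * (χ (u * y - u * x)).re
        = (∑ y ∈ Finset.univ.filter (fun y : ZMod N => f y = f x),
            μ y * (χ (u * y - u * x)).re)
          + ∑ y ∈ Finset.univ.filter (fun y : ZMod N => ¬ f y = f x),
            μ y * (χ (u * y - u * x)).re := hsplit.symm
    _ ≤ q + (1 - q) * (1 - δ) := by
        have := hB.trans_eq hBsum
        linarith
    _ = 1 - δ * (1 - q) := by ring
    _ ≤ 1 - δ * ε := by nlinarith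
  have htotal : ‖S‖ ^ 2 ≤ 1 - δ * ε := by
    rw [hsq]
    calc ∑ x : ZMod N, ∑ y : ZMod N, μ x * μ y * (χ (u * y - u * x)).re
        = ∑ x : ZMod N, μ x * ∑ y : ZMod N, μ y * (χ (u * y - u * x)).re := by
          apply Finset.sum_congr rfl; intro x _
          rw [Finset.mul_sum]
          apply Finset.sum_congr rfl; intro y _; ring
    _ ≤ ∑ x : ZMod N, μ x * (1 - δ * ε) := by
          apply Finset.sum_le_sum
          intro x _
          exact mul_le_mul_of_nonneg_left (hinner x) (hμ0 x)
    _ = 1 - δ * ε := by rw [← Finset.sum_mul, hμ1, one_mul]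
  rw [hSrw]
  set E := Real.exp (-ε / (N : ℝ) ^ 2) with hEdef
  have hEpos : 0 < E := Real.exp_pos _
  have hE2 : 1 - δ * ε ≤ E ^ 2 := by
    have h1 : E ^ 2 = Real.exp (-ε / (N : ℝ) ^ 2 + -ε / (N : ℝ) ^ 2) := by
      rw [Real.exp_add, sq]
    have h2 := Real.add_one_le_exp (-ε / (N : ℝ) ^ 2 + -ε / (N : ℝ) ^ 2)
    have hNpos : (0 : ℝ) < (N : ℝ) ^ 2 := by positivity
    have hδε : δ * ε ≥ -(-ε / (N : ℝ) ^ 2 + -ε / (N : ℝ) ^ 2) := by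
      rw [hδdef, ge_iff_le]
      have ha : -(-ε / (N : ℝ) ^ 2 + -ε / (N : ℝ) ^ 2) = 2 * ε / (N : ℝ) ^ 2 := by ring
      rw [ha, div_le_iff₀ hNpos]
      have hb : 8 / (N : ℝ) ^ 2 * ε * (N : ℝ) ^ 2 = 8 * ε := by field_simp
      rw [hb]
      linarith
    linarith
  have hS2 : ‖S‖ ^ 2 ≤ E ^ 2 := htotal.trans hE2
  nlinarith [norm_nonneg S]

/-- For an ε-balanced probability measure `μ` on `ℤ/p^kℤ` (each residue class mod `p`
has measure at most `1 - ε`) and any nonzero `u ∈ ℤ/p^kℤ`,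
`|E_{x ~ μ}(ζ^{ux})| ≤ e^{-ε/p^{2k}}` where `ζ = e^{2πi/p^k}`. -/
theorem stmt_7 (p k : ℕ) [Fact p.Prime] (hk : 1 ≤ k)
    (ε : ℝ) (hε0 : 0 < ε) (hε1 : ε < 1)
    (μ : ZMod (p ^ k) → ℝ) (hμ0 : ∀ x, 0 ≤ μ x) (hμ1 : ∑ x, μ x = 1)
    (hbal : ∀ a : ZMod p,
      ∑ x ∈ Finset.univ.filter
        (fun x : ZMod (p ^ k) =>
          ZMod.castHom (dvd_pow_self p (Nat.one_le_iff_ne_zero.mp hk)) (ZMod p) x = a),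
        μ x ≤ 1 - ε)
    (u : ZMod (p ^ k)) (hu : u ≠ 0) :
    ‖∑ x : ZMod (p ^ k), (μ x : ℂ) *
        Complex.exp (2 * Real.pi * Complex.I * ((u * x).val : ℂ) / ((p ^ k : ℕ) : ℂ))‖
      ≤ Real.exp (-ε / (p ^ (2 * k) : ℕ)) := by
  have hp := Fact.out (p := p.Prime)
  haveI : NeZero (p ^ k) := ⟨pow_ne_zero k hp.ne_zero⟩
  have hN2 : 2 ≤ p ^ k := by
    have := Nat.one_lt_pow (Nat.one_le_iff_ne_zero.mp hk) hp.one_lt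
    omega
  have hNsq : ((p ^ (2 * k) : ℕ) : ℝ) = ((p ^ k : ℕ) : ℝ) ^ 2 := by
    push_cast
    rw [pow_mul]
    ring
  rw [hNsq]
  set f := fun x : ZMod (p ^ k) =>
    ZMod.castHom (dvd_pow_self p (Nat.one_le_iff_ne_zero.mp hk)) (ZMod p) x with hfdef
  have hkey : ∀ x y : ZMod (p ^ k), f y ≠ f x → u * y - u * x ≠ 0 := by
    intro x y hne
    rw [← mul_sub]
    set w := y - x with hwdef
    have hw : f w ≠ 0 := by
      rw [hfdef]
      simp only [hwdef, map_sub]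
      intro h
      exact hne (sub_eq_zero.mp h)
    have hcast : f w = ((w.val : ℕ) : ZMod p) := by
      rw [hfdef]
      simp only [ZMod.castHom_apply, ← ZMod.natCast_val]
    have hdvd : ¬ p ∣ w.val := by
      intro h
      exact hw (by rw [hcast, (ZMod.natCast_eq_zero_iff _ _).mpr h])
    have hcop : (w.val).Coprime (p ^ k) :=
      ((Nat.Prime.coprime_iff_not_dvd hp).mpr hdvd).symm.pow_right k
    have hIsUnit : IsUnit w := by
      have := (ZMod.isUnit_iff_coprime w.val (p ^ k)).mpr hcop
      rwa [ZMod.natCast_rightInverse w] at this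
    obtain ⟨v, hv⟩ := hIsUnit.exists_right_inv
    intro h
    apply hu
    have h3 : u * (w * v) = u := by rw [hv, mul_one]
    rw [← h3, ← mul_assoc, h, zero_mul]
  exact char_sum_aux hN2 ε hε0 μ hμ0 hμ1 f
    (fun x => hbal (f x)) u hkey
end

section
/- Let P(t) ∈ ℤ_p[t] be a monic polynomial, G a finite module over ℤ_p[t]/(P(t)), and k ≥ 1 with p^{k−1}G = 0. For an n×n matrix X over ℤ_p with image X' over ℤ/p^kℤ, the cokernel cok(P(X)) is isomorphic to G as a ℤ_p[t]-module if and only if cok(P(X')) is isomorphic to G as a (ℤ/p^kℤ)[t]-module. -/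
open Polynomial

set_option maxHeartbeats 2000000
set_option synthInstance.maxHeartbeats 1000000

set_option maxHeartbeats 1000000 in
set_option synthInstance.maxHeartbeats 400000 in
lemma stmt13_red_mulVec {p : ℕ} [Fact p.Prime] {k n : ℕ}
    (A : Matrix (Fin n) (Fin n) ℤ_[p]) (v : Fin n → ℤ_[p]) :
    (A.map (PadicInt.toZModPow k)).mulVecLin (fun i => PadicInt.toZModPow k (v i))
      = fun i => PadicInt.toZModPow k (A.mulVecLin v i) := by
  funext i
  simp [Matrix.mulVecLin_apply, Matrix.mulVec, dotProduct, map_sum, Matrix.map_apply]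

set_option maxHeartbeats 1000000 in
set_option synthInstance.maxHeartbeats 400000 in
lemma stmt13_red_aeval {p : ℕ} [Fact p.Prime] {k n : ℕ}
    (A : Matrix (Fin n) (Fin n) ℤ_[p]) (q : Polynomial ℤ_[p]) (v : Fin n → ℤ_[p]) :
    (Polynomial.aeval (A.map (PadicInt.toZModPow k)).mulVecLin
        (q.map (PadicInt.toZModPow k))) (fun i => PadicInt.toZModPow k (v i))
      = fun i => PadicInt.toZModPow k ((Polynomial.aeval A.mulVecLin q) v i) := by
  induction q using Polynomial.induction_on generalizing v with
  | C a =>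
      funext i
      simp [Module.algebraMap_end_apply]
  | add q r hq hr =>
      funext i
      rw [Polynomial.map_add, map_add, map_add]
      simp only [LinearMap.add_apply, Pi.add_apply]
      rw [congrFun (hq v) i, congrFun (hr v) i]
      exact (map_add _ _ _).symm
  | monomial e a ih =>
      have h1 : (C a * X ^ (e + 1) : Polynomial ℤ_[p]) = X * (C a * X ^ e) := by ring
      rw [h1, Polynomial.map_mul, Polynomial.map_X, map_mul, map_mul, aeval_X, aeval_X]
      funext i
      rw [Module.End.mul_apply, Module.End.mul_apply, ih v, stmt13_red_mulVec]

lemma stmt13_mem_span_smul_top {A M : Type*} [CommRing A] [AddCommGroup M] [Module A M]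
    (P : A) (m : M) :
    m ∈ Ideal.span {P} • (⊤ : Submodule A M) ↔ ∃ m₀, m = P • m₀ := by
  constructor
  · intro h
    refine Submodule.smul_induction_on h (fun r hr x _ => ?_) ?_
    · obtain ⟨a, rfl⟩ := Ideal.mem_span_singleton'.mp hr
      exact ⟨a • x, by rw [smul_smul, mul_comm P a, mul_smul] ⟩
    · rintro x y ⟨x₀, rfl⟩ ⟨y₀, rfl⟩
      exact ⟨x₀ + y₀, by rw [smul_add]⟩
  · rintro ⟨m₀, rfl⟩
    exact Submodule.smul_mem_smul (Ideal.mem_span_singleton_self P) trivial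

lemma stmt13_ker_toZModPow {p : ℕ} [Fact p.Prime] {k : ℕ} {x : ℤ_[p]}
    (h : PadicInt.toZModPow k x = 0) : ∃ y, x = (p : ℤ_[p]) ^ k * y := by
  have hx : x ∈ RingHom.ker (PadicInt.toZModPow (p := p) k) := h
  rw [PadicInt.ker_toZModPow, Ideal.mem_span_singleton'] at hx
  obtain ⟨a, ha⟩ := hx
  exact ⟨a, by rw [← ha, mul_comm]⟩

lemma stmt13_csmul_eq_nsmul {p : ℕ} [Fact p.Prime] {G : Type*} [AddCommGroup G]
    [Module (Polynomial ℤ_[p]) G] (j : ℕ) (g : G) :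
    (C ((p : ℤ_[p]) ^ j) : Polynomial ℤ_[p]) • g = (p ^ j : ℕ) • g := by
  have h1 : ((p : ℤ_[p]) ^ j) = ((p ^ j : ℕ) : ℤ_[p]) := by push_cast; ring
  rw [h1, map_natCast (C : ℤ_[p] →+* Polynomial ℤ_[p]), Nat.cast_smul_eq_nsmul]

theorem stmt13_test : True := trivial

noncomputable def stmt13_r {p : ℕ} [Fact p.Prime] {k n : ℕ} (X : Matrix (Fin n) (Fin n) ℤ_[p]) :
    Module.AEval' X.mulVecLin →+
      Module.AEval' (X.map (PadicInt.toZModPow k)).mulVecLin :=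
  AddMonoidHom.mk' (fun m => Module.AEval'.of (X.map (PadicInt.toZModPow k)).mulVecLin
      (fun i => PadicInt.toZModPow k ((Module.AEval'.of X.mulVecLin).symm m i)))
    (by
      intro a b
      show Module.AEval'.of (X.map (PadicInt.toZModPow k)).mulVecLin _
          = Module.AEval'.of (X.map (PadicInt.toZModPow k)).mulVecLin _
          + Module.AEval'.of (X.map (PadicInt.toZModPow k)).mulVecLin _
      rw [← map_add (Module.AEval'.of (X.map (PadicInt.toZModPow k)).mulVecLin)]
      congr 1
      funext i
      rw [map_add (Module.AEval'.of X.mulVecLin).symm a b]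
      exact map_add (PadicInt.toZModPow k) _ _)

lemma stmt13_r_smul {p : ℕ} [Fact p.Prime] {k n : ℕ} (X : Matrix (Fin n) (Fin n) ℤ_[p])
    (q : Polynomial ℤ_[p]) (m : Module.AEval' X.mulVecLin) :
    stmt13_r (k := k) X (q • m) = (q.map (PadicInt.toZModPow k)) • stmt13_r (k := k) X m := by
  show Module.AEval'.of _ _ = _
  rw [Module.AEval.of_symm_smul]
  have h1 : ((aeval X.mulVecLin) q • (Module.AEval'.of X.mulVecLin).symm m)
      = (aeval X.mulVecLin) q ((Module.AEval'.of X.mulVecLin).symm m) := rfl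
  rw [h1]
  have h2 : (fun i => PadicInt.toZModPow k
        (((aeval X.mulVecLin) q) ((Module.AEval'.of X.mulVecLin).symm m) i))
      = (Polynomial.aeval (X.map (PadicInt.toZModPow k)).mulVecLin
          (q.map (PadicInt.toZModPow k)))
        (fun i => PadicInt.toZModPow k ((Module.AEval'.of X.mulVecLin).symm m i)) :=
    (stmt13_red_aeval X q _).symm
  rw [h2]
  exact Module.AEval.of_aeval_smul _ _ _

lemma stmt13_r_surj {p : ℕ} [Fact p.Prime] {k n : ℕ} (X : Matrix (Fin n) (Fin n) ℤ_[p]) :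
    Function.Surjective (stmt13_r (k := k) X) := by
  intro x
  have hs : ∀ i, ∃ y : ℤ_[p], PadicInt.toZModPow k y
      = (Module.AEval'.of (X.map (PadicInt.toZModPow k)).mulVecLin).symm x i :=
    fun i => ZMod.ringHom_surjective _ _
  choose v hv using hs
  refine ⟨Module.AEval'.of X.mulVecLin v, ?_⟩
  show Module.AEval'.of _ _ = x
  have : (fun i => PadicInt.toZModPow k
      ((Module.AEval'.of X.mulVecLin).symm (Module.AEval'.of X.mulVecLin v) i))
      = (Module.AEval'.of (X.map (PadicInt.toZModPow k)).mulVecLin).symm x := by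
    funext i
    rw [LinearEquiv.symm_apply_apply]
    exact hv i
  rw [this, LinearEquiv.apply_symm_apply]

lemma stmt13_r_ker {p : ℕ} [Fact p.Prime] {k n : ℕ} (X : Matrix (Fin n) (Fin n) ℤ_[p])
    (m : Module.AEval' X.mulVecLin) (h : stmt13_r (k := k) X m = 0) :
    ∃ m₁, m = (C ((p : ℤ_[p]) ^ k) : Polynomial ℤ_[p]) • m₁ := by
  have h0 : ∀ i, PadicInt.toZModPow k ((Module.AEval'.of X.mulVecLin).symm m i) = 0 := by
    intro i
    have := congrArg (fun z => (Module.AEval'.of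
      (X.map (PadicInt.toZModPow k)).mulVecLin).symm z i) h
    simpa [stmt13_r] using this
  have hy : ∀ i, ∃ y : ℤ_[p], (Module.AEval'.of X.mulVecLin).symm m i = (p : ℤ_[p]) ^ k * y :=
    fun i => stmt13_ker_toZModPow (h0 i)
  choose y hy using hy
  refine ⟨Module.AEval'.of X.mulVecLin y, ?_⟩
  rw [Module.AEval.C_smul]
  rw [← map_smul]
  apply (Module.AEval'.of X.mulVecLin).symm.injective
  rw [LinearEquiv.symm_apply_apply]
  funext i
  exact hy i

/-- For a monic `P(t) ∈ ℤ_p[t]`, a finite `ℤ_p[t]/(P)`-module `G` with `p^(k-1)·G = 0`,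
and an `n × n` matrix `X` over `ℤ_p` with reduction `X'` mod `p^k`:
`cok(P(X)) ≅ G` as `ℤ_p[t]`-modules (with `t` acting via `X`) if and only if
`cok(P(X')) ≅ G` as `(ℤ/p^kℤ)[t]`-modules (with `t` acting via `X'`). -/
theorem stmt_13 (p k n : ℕ) [Fact p.Prime] (hk : 1 ≤ k)
    (P : Polynomial ℤ_[p]) (hP : P.Monic)
    (G : Type*) [AddCommGroup G] [Finite G]
    [Module (Polynomial ℤ_[p]) G] [Module (Polynomial (ZMod (p ^ k))) G]
    (hcompat : ∀ (q : Polynomial ℤ_[p]) (g : G),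
      q • g = (q.map (PadicInt.toZModPow k)) • g)
    (hPann : ∀ g : G, P • g = 0)
    (hGk : ∀ g : G, (p ^ (k - 1)) • g = 0)
    (X : Matrix (Fin n) (Fin n) ℤ_[p]) :
    Nonempty
      ((Module.AEval' X.mulVecLin ⧸
          (Ideal.span {P} • (⊤ : Submodule (Polynomial ℤ_[p])
            (Module.AEval' X.mulVecLin))))
        ≃ₗ[Polynomial ℤ_[p]] G)
    ↔ Nonempty
      ((Module.AEval' (X.map (PadicInt.toZModPow k)).mulVecLin ⧸
          (Ideal.span {P.map (PadicInt.toZModPow k)} •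
            (⊤ : Submodule (Polynomial (ZMod (p ^ k)))
              (Module.AEval' (X.map (PadicInt.toZModPow k)).mulVecLin))))
        ≃ₗ[Polynomial (ZMod (p ^ k))] G) := by
  classical
  have hGpk : ∀ g : G, (C ((p : ℤ_[p]) ^ k) : Polynomial ℤ_[p]) • g = 0 := by
    intro g
    rw [stmt13_csmul_eq_nsmul]
    have hk' : p ^ k = p ^ (k - 1) * p := by
      rw [← pow_succ]
      congr 1
      omega
    rw [hk', mul_smul]
    exact hGk _
  have hGpk1 : ∀ g : G, (C ((p : ℤ_[p]) ^ (k - 1)) : Polynomial ℤ_[p]) • g = 0 := by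
    intro g
    rw [stmt13_csmul_eq_nsmul]
    exact hGk _
  set r := stmt13_r (k := k) X with hr
  obtain ⟨lift, hlift⟩ : ∃ l, ∀ x, r (l x) = x :=
    ⟨Function.surjInv (stmt13_r_surj X), Function.surjInv_eq (stmt13_r_surj X)⟩
  constructor
  · rintro ⟨e⟩
    let F : Module.AEval' X.mulVecLin →ₗ[Polynomial ℤ_[p]] G :=
      e.toLinearMap ∘ₗ Submodule.mkQ _
    have hFzero : ∀ m, r m = 0 → F m = 0 := by
      intro m hm
      obtain ⟨m₁, rfl⟩ := stmt13_r_ker X m hm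
      rw [map_smul]
      exact hGpk _
    have hFcongr : ∀ m m', r m = r m' → F m = F m' := by
      intro m m' h
      have h2 : F (m - m') = 0 := hFzero _ (by rw [map_sub, h, sub_self])
      rw [map_sub, sub_eq_zero] at h2
      exact h2
    let E : Module.AEval' (X.map (PadicInt.toZModPow k)).mulVecLin
        →ₗ[Polynomial (ZMod (p ^ k))] G :=
      { toFun := fun x => F (lift x)
        map_add' := by
          intro x y
          show F (lift (x + y)) = F (lift x) + F (lift y)
          have hx : x + y = r (lift x + lift y) := by rw [map_add, hlift, hlift]
          rw [hx, hFcongr _ _ (hlift _)]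
          exact map_add F _ _
        map_smul' := by
          intro b x
          obtain ⟨q, rfl⟩ := Polynomial.map_surjective _
            (ZMod.ringHom_surjective (PadicInt.toZModPow k)) b
          show F (lift ((Polynomial.map (PadicInt.toZModPow k) q) • x))
            = (Polynomial.map (PadicInt.toZModPow k) q) • F (lift x)
          have hx : (Polynomial.map (PadicInt.toZModPow k) q) • x = r (q • lift x) := by
            rw [hr, stmt13_r_smul, ← hr, hlift]
          rw [hx, hFcongr _ _ (hlift _), map_smul, hcompat] }
    have hle : Ideal.span {P.map (PadicInt.toZModPow k)} •
        (⊤ : Submodule (Polynomial (ZMod (p ^ k)))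
          (Module.AEval' (X.map (PadicInt.toZModPow k)).mulVecLin)) ≤ LinearMap.ker E := by
      intro x hx
      obtain ⟨x₀, rfl⟩ := (stmt13_mem_span_smul_top _ _).mp hx
      rw [LinearMap.mem_ker]
      show F (lift ((P.map (PadicInt.toZModPow k)) • x₀)) = 0
      have hx0 : (P.map (PadicInt.toZModPow k)) • x₀ = r (P • lift x₀) := by
        rw [hr, stmt13_r_smul, ← hr, hlift]
      rw [hx0, hFcongr _ _ (hlift _), map_smul]
      exact hPann _
    let Ebar := Submodule.liftQ _ E hle
    have hsurj : Function.Surjective Ebar := by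
      intro g
      obtain ⟨z, hz⟩ := e.surjective g
      obtain ⟨m, rfl⟩ := Submodule.Quotient.mk_surjective _ z
      refine ⟨Submodule.Quotient.mk (r m), ?_⟩
      rw [Submodule.liftQ_apply]
      show F (lift (r m)) = g
      rw [hFcongr _ _ (hlift _)]
      exact hz
    have hinj : Function.Injective Ebar := by
      refine (injective_iff_map_eq_zero Ebar).mpr ?_
      intro z hz
      obtain ⟨x, rfl⟩ := Submodule.Quotient.mk_surjective _ z
      rw [Submodule.liftQ_apply] at hz
      have h1 : e (Submodule.Quotient.mk (lift x)) = 0 := hz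
      have h2 : (Submodule.Quotient.mk (lift x) : Module.AEval' X.mulVecLin ⧸ _) = 0 :=
        e.injective (by rw [h1, map_zero])
      rw [Submodule.Quotient.mk_eq_zero] at h2
      obtain ⟨m₀, hm₀⟩ := (stmt13_mem_span_smul_top _ _).mp h2
      have h3 : x = (P.map (PadicInt.toZModPow k)) • r m₀ := by
        rw [hr, ← stmt13_r_smul, ← hr, ← hm₀, hlift]
      rw [Submodule.Quotient.mk_eq_zero, h3]
      exact (stmt13_mem_span_smul_top _ _).mpr ⟨r m₀, rfl⟩
    exact ⟨LinearEquiv.ofBijective Ebar ⟨hinj, hsurj⟩⟩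
  · rintro ⟨e⟩
    let F : Module.AEval' X.mulVecLin →ₗ[Polynomial ℤ_[p]] G :=
      { toFun := fun m => e (Submodule.Quotient.mk (r m))
        map_add' := by
          intro a b
          show e (Submodule.Quotient.mk (r (a + b)))
            = e (Submodule.Quotient.mk (r a)) + e (Submodule.Quotient.mk (r b))
          rw [map_add r, Submodule.Quotient.mk_add, map_add]
        map_smul' := by
          intro q m
          show e (Submodule.Quotient.mk (r (q • m)))
            = q • e (Submodule.Quotient.mk (r m))
          rw [hr, stmt13_r_smul, ← hr, Submodule.Quotient.mk_smul, map_smul, ← hcompat] }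
    have hFapp : ∀ m, F m = e (Submodule.Quotient.mk (r m)) := fun _ => rfl
    have hFP : Ideal.span {P} • (⊤ : Submodule (Polynomial ℤ_[p])
        (Module.AEval' X.mulVecLin)) ≤ LinearMap.ker F := by
      intro m hm
      obtain ⟨m₀, rfl⟩ := (stmt13_mem_span_smul_top _ _).mp hm
      rw [LinearMap.mem_ker, map_smul]
      exact hPann _
    let g' := Submodule.liftQ _ F hFP
    have hsurj : Function.Surjective g' := by
      intro g
      obtain ⟨z, hz⟩ := e.surjective g
      obtain ⟨x, rfl⟩ := Submodule.Quotient.mk_surjective _ z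
      obtain ⟨m, hm⟩ := stmt13_r_surj (k := k) X x
      refine ⟨Submodule.Quotient.mk m, ?_⟩
      rw [Submodule.liftQ_apply, hFapp, hr, hm]
      exact hz
    have hker0 : ∀ m : Module.AEval' X.mulVecLin, F m = 0 →
        ∃ m₁, (Submodule.Quotient.mk m :
            Module.AEval' X.mulVecLin ⧸ (Ideal.span {P} • (⊤ : Submodule (Polynomial ℤ_[p])
              (Module.AEval' X.mulVecLin))))
          = (C ((p : ℤ_[p]) ^ k) : Polynomial ℤ_[p]) • Submodule.Quotient.mk m₁ := by
      intro m hm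
      have h1 : (Submodule.Quotient.mk (r m) :
          Module.AEval' (X.map (PadicInt.toZModPow k)).mulVecLin ⧸
            (Ideal.span {P.map (PadicInt.toZModPow k)} •
              (⊤ : Submodule (Polynomial (ZMod (p ^ k)))
                (Module.AEval' (X.map (PadicInt.toZModPow k)).mulVecLin)))) = 0 :=
        e.injective (by rw [map_zero]; exact hm)
      rw [Submodule.Quotient.mk_eq_zero] at h1
      obtain ⟨x₀, hx₀⟩ := (stmt13_mem_span_smul_top _ _).mp h1
      obtain ⟨m₀, hm₀⟩ := stmt13_r_surj (k := k) X x₀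
      have h2 : r (m - P • m₀) = 0 := by
        rw [map_sub, hx₀, ← hm₀, ← hr, hr, stmt13_r_smul, ← hr, sub_self]
      obtain ⟨m₁, hm₁⟩ := stmt13_r_ker X _ h2
      rw [sub_eq_iff_eq_add] at hm₁
      refine ⟨m₁, ?_⟩
      rw [hm₁, Submodule.Quotient.mk_add, Submodule.Quotient.mk_smul]
      have h4 : (Submodule.Quotient.mk (P • m₀) :
          Module.AEval' X.mulVecLin ⧸ (Ideal.span {P} • (⊤ : Submodule (Polynomial ℤ_[p])
            (Module.AEval' X.mulVecLin)))) = 0 := by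
        rw [Submodule.Quotient.mk_eq_zero]
        exact (stmt13_mem_span_smul_top _ _).mpr ⟨m₀, rfl⟩
      rw [h4, add_zero]
    haveI hNM : IsNoetherian ℤ_[p] (Module.AEval' X.mulVecLin) :=
      isNoetherian_of_linearEquiv (Module.AEval'.of X.mulVecLin)
    haveI hNQ : IsNoetherian ℤ_[p] (Module.AEval' X.mulVecLin ⧸
        (Ideal.span {P} • (⊤ : Submodule (Polynomial ℤ_[p])
          (Module.AEval' X.mulVecLin)))) := by
      refine isNoetherian_of_surjective
        ((Submodule.mkQ _).restrictScalars ℤ_[p]) ?_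
      rw [LinearMap.range_eq_top]
      exact Submodule.Quotient.mk_surjective _
    have htower : ∀ (c : ℤ_[p]) (z : Module.AEval' X.mulVecLin ⧸
        (Ideal.span {P} • (⊤ : Submodule (Polynomial ℤ_[p])
          (Module.AEval' X.mulVecLin)))),
        (C c : Polynomial ℤ_[p]) • z = c • z := by
      intro c z
      rw [← Polynomial.algebraMap_eq]
      exact algebraMap_smul (Polynomial ℤ_[p]) c z
    set T : Submodule ℤ_[p] (Module.AEval' X.mulVecLin ⧸
        (Ideal.span {P} • (⊤ : Submodule (Polynomial ℤ_[p])
          (Module.AEval' X.mulVecLin)))) :=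
      LinearMap.range (((p : ℤ_[p]) ^ (k - 1)) • LinearMap.id) with hT
    have hg0 : ∀ z, g' ((p : ℤ_[p]) ^ (k - 1) • z) = 0 := by
      intro z
      rw [← htower, map_smul]
      exact hGpk1 _
    have hsub : T ≤ Ideal.span {(p : ℤ_[p])} • T := by
      rintro x ⟨y, rfl⟩
      show (((p : ℤ_[p]) ^ (k - 1)) • LinearMap.id) y ∈ _
      rw [LinearMap.smul_apply, LinearMap.id_apply]
      obtain ⟨m, hm⟩ := Submodule.Quotient.mk_surjective _ ((p : ℤ_[p]) ^ (k - 1) • y)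
      have hFm : F m = 0 := by
        have h5 := hg0 y
        rw [← hm, Submodule.liftQ_apply] at h5
        exact h5
      obtain ⟨m₁, hm₁⟩ := hker0 m hFm
      rw [← hm, hm₁, htower]
      have hk' : (p : ℤ_[p]) ^ k = (p : ℤ_[p]) * (p : ℤ_[p]) ^ (k - 1) := by
        rw [← pow_succ']
        congr 1
        omega
      rw [hk', mul_smul]
      exact Submodule.smul_mem_smul (Ideal.mem_span_singleton_self _) ⟨_, rfl⟩
    have hjac : Ideal.span {(p : ℤ_[p])} ≤ (⊥ : Ideal ℤ_[p]).jacobson := by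
      rw [IsLocalRing.jacobson_eq_maximalIdeal ⊥ bot_ne_top]
      exact le_of_eq PadicInt.maximalIdeal_eq_span_p.symm
    have hTbot : T = ⊥ :=
      Submodule.eq_bot_of_le_smul_of_le_jacobson_bot (Ideal.span {(p : ℤ_[p])}) T
        (IsNoetherian.noetherian T) hsub hjac
    have hzero : ∀ z : Module.AEval' X.mulVecLin ⧸
        (Ideal.span {P} • (⊤ : Submodule (Polynomial ℤ_[p])
          (Module.AEval' X.mulVecLin))),
        (p : ℤ_[p]) ^ (k - 1) • z = 0 := by
      intro z
      have hmem : (p : ℤ_[p]) ^ (k - 1) • z ∈ T := ⟨z, by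
        rw [LinearMap.smul_apply, LinearMap.id_apply]⟩
      rw [hTbot] at hmem
      simpa using hmem
    have hinj : ∀ z, g' z = 0 → z = 0 := by
      intro z hz
      obtain ⟨m, rfl⟩ := Submodule.Quotient.mk_surjective _ z
      rw [Submodule.liftQ_apply] at hz
      obtain ⟨m₁, hm₁⟩ := hker0 m hz
      rw [hm₁, htower]
      have hk' : (p : ℤ_[p]) ^ k = (p : ℤ_[p]) * (p : ℤ_[p]) ^ (k - 1) := by
        rw [← pow_succ']
        congr 1
        omega
      rw [hk', mul_smul, hzero, smul_zero]
    exact ⟨LinearEquiv.ofBijective g' ⟨(injective_iff_map_eq_zero g').mpr hinj, hsurj⟩⟩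
end
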